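/- For every integer j ≥ 1, the 2-adic valuation of 2^{2j} · (12j+2)! · (6j)! / ((8j+2)! · (8j-2)! · (12j)) equals 1 + 2·v_2((3j)!/j!). -/

import Mathlib

open Nat

private def s2 (n : ℕ) : ℕ := (Nat.digits 2 n).sum

private lemma s2_two_mul {n : ℕ} (hn : 0 < n) : s2 (2 * n) = s2 n := by
  unfold s2
  rw [Nat.digits_def' one_lt_two (by omega)]
  simp [Nat.mul_div_cancel_left n (by norm_num : 0 < 2), Nat.mul_mod_right]

private lemma s2_two_mul_add_one (n : ℕ) : s2 (2 * n + 1) = 1 + s2 n := by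
  unfold s2
  rw [Nat.digits_def' one_lt_two (by omega)]
  have h1 : (2 * n + 1) % 2 = 1 := by omega
  have h2 : (2 * n + 1) / 2 = n := by omega
  rw [h1, h2]
  simp [add_comm]

private lemma s2_key : ∀ j : ℕ, 1 ≤ j → s2 (j - 1) + 1 = s2 j + padicValNat 2 j := by
  intro j
  induction j using Nat.strong_induction_on with
  | _ j ih =>
    intro hj
    rcases Nat.even_or_odd j with ⟨m, hm⟩ | ⟨m, hm⟩
    · have hm1 : 1 ≤ m := by omega
      have h2m : j = 2 * m := by omega
      have hrec := ih m (by omega) hm1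
      have hval : padicValNat 2 (2 * m) = 1 + padicValNat 2 m := by
        rw [padicValNat.mul (by norm_num) (by omega), padicValNat.self one_lt_two]
      have hsub : j - 1 = 2 * (m - 1) + 1 := by omega
      rw [h2m] at *
      rw [hsub, s2_two_mul_add_one, s2_two_mul hm1, hval]
      omega
    · have hodd : j = 2 * m + 1 := by omega
      have hval : padicValNat 2 j = 0 := by
        rw [hodd]
        exact padicValNat.eq_zero_of_not_dvd (by omega)
      have hsub : j - 1 = 2 * m := by omega
      rcases Nat.eq_zero_or_pos m with hm0 | hm0
      · have hj1 : j = 1 := by omega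
        subst hj1; simp [s2]
      · rw [hsub, s2_two_mul hm0, hval, hodd, s2_two_mul_add_one]
        omega

private lemma v2_factorial (n : ℕ) : (padicValNat 2 n ! : ℤ) = n - s2 n := by
  have h := sub_one_mul_padicValNat_factorial (p := 2) n
  have hle : (Nat.digits 2 n).sum ≤ n := Nat.digit_sum_le 2 n
  unfold s2
  omega

open Nat in
theorem v2_classical_coeff (j : ℕ) (hj : 1 ≤ j) :
    padicValRat 2 ((2 ^ (2 * j) * (12 * j + 2)! * (6 * j)! : ℚ) /
        ((8 * j + 2)! * (8 * j - 2)! * (12 * j))) =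
      1 + 2 * padicValRat 2 (((3 * j)! : ℚ) / (j ! : ℚ)) := by
  have f1 : ((12 * j + 2)! : ℚ) ≠ 0 := by positivity
  have f2 : ((6 * j)! : ℚ) ≠ 0 := by positivity
  have f3 : ((8 * j + 2)! : ℚ) ≠ 0 := by positivity
  have f4 : ((8 * j - 2)! : ℚ) ≠ 0 := by positivity
  have f5 : ((3 * j)! : ℚ) ≠ 0 := by positivity
  have f6 : ((j)! : ℚ) ≠ 0 := by positivity
  have f7 : ((12 * j : ℕ) : ℚ) ≠ 0 := by
    simp; omega
  have hp : (2 : ℚ) ^ (2 * j) ≠ 0 := by positivity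
  have h12 : ((12 : ℚ) * j) = ((12 * j : ℕ) : ℚ) := by push_cast; ring
  rw [h12]
  rw [padicValRat.div (by exact mul_ne_zero (mul_ne_zero hp f1) f2)
      (mul_ne_zero (mul_ne_zero f3 f4) f7),
    padicValRat.mul (mul_ne_zero hp f1) f2, padicValRat.mul hp f1,
    padicValRat.mul (mul_ne_zero f3 f4) f7, padicValRat.mul f3 f4,
    padicValRat.div f5 f6,
    padicValRat.pow (2:ℚ),
    show (2:ℚ) = ((2:ℕ):ℚ) from by norm_num, padicValRat.self one_lt_two]
  simp only [padicValRat.of_nat]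
  -- valuation of 12*j
  have hv12 : padicValNat 2 (12 * j) = 2 + padicValNat 2 j := by
    have : 12 * j = 2 * (2 * (3 * j)) := by ring
    rw [this, padicValNat.mul (by norm_num) (by omega),
      padicValNat.mul (by norm_num) (by omega),
      padicValNat.mul (by norm_num) (by omega),
      padicValNat.self one_lt_two]
    have h3 : padicValNat 2 3 = 0 := padicValNat.eq_zero_of_not_dvd (by omega)
    omega
  -- digit sum identities
  have hs1 : s2 (12 * j + 2) = 1 + s2 (3 * j) := by
    have a1 : s2 (12 * j + 2) = s2 (6 * j + 1) := by
      rw [show 12 * j + 2 = 2 * (6 * j + 1) by ring]; exact s2_two_mul (by omega)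
    have a2 : s2 (6 * j + 1) = 1 + s2 (3 * j) := by
      rw [show 6 * j + 1 = 2 * (3 * j) + 1 by ring]; exact s2_two_mul_add_one _
    omega
  have hs2 : s2 (6 * j) = s2 (3 * j) := by
    have h : 6 * j = 2 * (3 * j) := by ring
    rw [h, s2_two_mul (by omega)]
  have hs3 : s2 (8 * j + 2) = 1 + s2 j := by
    have a1 : s2 (8 * j + 2) = s2 (4 * j + 1) := by
      rw [show 8 * j + 2 = 2 * (4 * j + 1) by ring]; exact s2_two_mul (by omega)
    have a2 : s2 (4 * j + 1) = 1 + s2 (2 * j) := by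
      rw [show 4 * j + 1 = 2 * (2 * j) + 1 by ring]; exact s2_two_mul_add_one _
    have a3 : s2 (2 * j) = s2 j := s2_two_mul (by omega)
    omega
  have hs4 : s2 (8 * j - 2) = 2 + s2 (j - 1) := by
    have a1 : s2 (8 * j - 2) = s2 (4 * j - 1) := by
      rw [show 8 * j - 2 = 2 * (4 * j - 1) by omega]; exact s2_two_mul (by omega)
    have a2 : s2 (4 * j - 1) = 1 + s2 (2 * j - 1) := by
      rw [show 4 * j - 1 = 2 * (2 * j - 1) + 1 by omega]; exact s2_two_mul_add_one _
    have a3 : s2 (2 * j - 1) = 1 + s2 (j - 1) := by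
      rw [show 2 * j - 1 = 2 * (j - 1) + 1 by omega]; exact s2_two_mul_add_one _
    omega
  have hkey := s2_key j hj
  have e1 := v2_factorial (12 * j + 2)
  have e2 := v2_factorial (6 * j)
  have e3 := v2_factorial (8 * j + 2)
  have e4 := v2_factorial (8 * j - 2)
  have e5 := v2_factorial (3 * j)
  have e6 := v2_factorial j
  have c1 : ((8 * j - 2 : ℕ) : ℤ) = 8 * (j : ℤ) - 2 := by omega
  rw [c1] at e4
  rw [e1, e2, e3, e4, e5, e6]
  push_cast [hv12, hs1, hs2, hs3, hs4]
  have hcast : (s2 (j-1) : ℤ) + 1 = s2 j + padicValNat 2 j := by exact_mod_cast hkey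
  ring_nf
  ring_nf at hcast
  linarith
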